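/- arXiv:2305.13747 — 3 statements merged into one kernel-verified Lean document; each statement's English description precedes it below -/
import Mathlib

section
/- Under the assumptions of the one-step policy improvement setting, if the modified policy's action differs from the base policy's action at state s, i.e., π_mod(s) ≠ π_base(s), then the inequality is strict: Q_{π_base}(s, π_mod(s)) > V_{π_base}(s). -/
theorem stmt_1
    {S A : Type*} [Fintype S] [Fintype A] [Nonempty A]
    (P : S → A → S → ℝ) (r : S → A → ℝ) (γ : ℝ) (hγ0 : 0 ≤ γ) (hγ1 : γ < 1)
    (f : S → A → ℝ) (hf : ∀ s, Function.Injective (f s))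
    (α : ℝ) (hα0 : 0 < α) (hα1 : α < 1)
    (πbase πmod : S → A)
    (Vbase : S → ℝ)
    (hVbase : ∀ s, Vbase s = r s (πbase s) + γ * ∑ s' : S, P s (πbase s) s' * Vbase s')
    (Qbase : S → A → ℝ)
    (hQbase : ∀ s a, Qbase s a = r s a + γ * ∑ s' : S, P s a s' * Vbase s')
    (hbase : ∀ s a, f s a ≤ f s (πbase s))
    (hmod : ∀ s a, (1 - α) * f s a + α * Qbase s a
        ≤ (1 - α) * f s (πmod s) + α * Qbase s (πmod s))
    (s : S) (hne : πmod s ≠ πbase s) :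
    Qbase s (πmod s) > Vbase s := by
  have hQV : Qbase s (πbase s) = Vbase s := by rw [hQbase, hVbase]
  have hflt : f s (πmod s) < f s (πbase s) :=
    lt_of_le_of_ne (hbase s (πmod s)) (fun h => hne (hf s h))
  have h1 := hmod s (πbase s)
  have h2 : α * Qbase s (πbase s) < α * Qbase s (πmod s) := by nlinarith
  have h3 : Qbase s (πbase s) < Qbase s (πmod s) := lt_of_mul_lt_mul_left h2 hα0.le
  rw [hQV] at h3
  exact h3
end

section
/- Main policy improvement theorem: let π_base(s) = argmax_a f(s,a) with f(s,·) injective for each s, and π_mod(s) = argmax_a [(1-α) f(s,a) + α Q_{π_base}(s,a)] for fixed α ∈ (0,1). Then V_{π_mod}(s) ≥ V_{π_base}(s) for every state s of the finite discounted MDP. -/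
theorem stmt_7
    {S A : Type*} [Fintype S] [Fintype A] [Nonempty A]
    (P : S → A → S → ℝ) (r : S → A → ℝ) (γ : ℝ) (hγ0 : 0 ≤ γ) (hγ1 : γ < 1)
    (hPnn : ∀ s a s', 0 ≤ P s a s') (hPsum : ∀ s a, ∑ s' : S, P s a s' = 1)
    (f : S → A → ℝ) (hf : ∀ s, Function.Injective (f s))
    (α : ℝ) (hα0 : 0 < α) (hα1 : α < 1)
    (πbase πmod : S → A)
    (Vbase : S → ℝ)
    (hVbase : ∀ s, Vbase s = r s (πbase s) + γ * ∑ s' : S, P s (πbase s) s' * Vbase s')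
    (Qbase : S → A → ℝ)
    (hQbase : ∀ s a, Qbase s a = r s a + γ * ∑ s' : S, P s a s' * Vbase s')
    (hbase : ∀ s a, f s a ≤ f s (πbase s))
    (hmod : ∀ s a, (1 - α) * f s a + α * Qbase s a
        ≤ (1 - α) * f s (πmod s) + α * Qbase s (πmod s))
    (Vmod : S → ℝ)
    (hVmod : ∀ s, Vmod s = r s (πmod s) + γ * ∑ s' : S, P s (πmod s) s' * Vmod s') :
    ∀ s, Vmod s ≥ Vbase s := by
  intro s
  set d : S → ℝ := fun s => Vmod s - Vbase s with hd
  have hQV : ∀ s, Qbase s (πmod s) ≥ Vbase s := by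
    intro s
    have h1 := hmod s (πbase s)
    have h2 := hbase s (πmod s)
    have h3 : Vbase s = Qbase s (πbase s) := by rw [hQbase, hVbase]
    nlinarith
  have hrec : ∀ s, d s ≥ γ * ∑ s', P s (πmod s) s' * d s' := by
    intro s
    have h1 := hVmod s
    have h2 := hQbase s (πmod s)
    have h3 := hQV s
    have hsum : ∑ s', P s (πmod s) s' * d s'
        = (∑ s', P s (πmod s) s' * Vmod s') - ∑ s', P s (πmod s) s' * Vbase s' := by
      rw [← Finset.sum_sub_distrib]
      exact Finset.sum_congr rfl fun i _ => by simp [hd, mul_sub]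
    simp only [hd]
    rw [hsum]
    nlinarith
  haveI : Nonempty S := ⟨s⟩
  obtain ⟨s0, _, hs0⟩ := Finset.exists_min_image Finset.univ d ⟨s, Finset.mem_univ s⟩
  have hmin : ∀ s', d s0 ≤ d s' := fun s' => hs0 s' (Finset.mem_univ s')
  have hb : γ * d s0 ≤ d s0 := by
    calc γ * d s0 = γ * ∑ s', P s0 (πmod s0) s' * d s0 := by
          rw [← Finset.sum_mul, hPsum]; ring
      _ ≤ γ * ∑ s', P s0 (πmod s0) s' * d s' := by
          apply mul_le_mul_of_nonneg_left _ hγ0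
          exact Finset.sum_le_sum fun i _ => mul_le_mul_of_nonneg_left (hmin i) (hPnn _ _ _)
      _ ≤ d s0 := hrec s0
  have h0 : 0 ≤ d s0 := by nlinarith
  have := hmin s
  simp only [hd] at *
  linarith
end

section
/- Greedy policy improvement (classical, full α=1 case): in a finite discounted MDP, let π⁺(s) = argmax_a Q_π(s,a). Then V_{π⁺}(s) ≥ V_π(s) for all states s, and if π⁺ ≠ π on some state where the argmax is strict, V_{π⁺} strictly dominates V_π at that state. -/
theorem stmt_13
    {S A : Type*} [Fintype S] [Fintype A] [Nonempty A]
    (P : S → A → S → ℝ) (r : S → A → ℝ) (γ : ℝ) (hγ0 : 0 ≤ γ) (hγ1 : γ < 1)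
    (hPnn : ∀ s a s', 0 ≤ P s a s') (hPsum : ∀ s a, ∑ s' : S, P s a s' = 1)
    (π πplus : S → A)
    (Vπ : S → ℝ)
    (hVπ : ∀ s, Vπ s = r s (π s) + γ * ∑ s' : S, P s (π s) s' * Vπ s')
    (Qπ : S → A → ℝ)
    (hQπ : ∀ s a, Qπ s a = r s a + γ * ∑ s' : S, P s a s' * Vπ s')
    (hplus : ∀ s a, Qπ s a ≤ Qπ s (πplus s))
    (Vplus : S → ℝ)
    (hVplus : ∀ s, Vplus s = r s (πplus s) + γ * ∑ s' : S, P s (πplus s) s' * Vplus s') :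
    (∀ s, Vplus s ≥ Vπ s) ∧ (∀ s, Qπ s (πplus s) > Qπ s (π s) → Vplus s > Vπ s) := by
  rcases isEmpty_or_nonempty S with hS | hS
  · exact ⟨fun s => (IsEmpty.false s).elim, fun s => (IsEmpty.false s).elim⟩
  -- δ s = Vπ s - Vplus s, show δ ≤ 0
  set δ : S → ℝ := fun s => Vπ s - Vplus s with hδ
  -- key step inequality
  have hstep : ∀ s, δ s ≤ γ * ∑ s' : S, P s (πplus s) s' * δ s' := by
    intro s
    have h1 : Vπ s ≤ r s (πplus s) + γ * ∑ s' : S, P s (πplus s) s' * Vπ s' := by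
      have := hplus s (π s)
      rw [hQπ, hQπ] at this
      calc Vπ s = r s (π s) + γ * ∑ s' : S, P s (π s) s' * Vπ s' := hVπ s
        _ ≤ _ := this
    have h2 : Vplus s = r s (πplus s) + γ * ∑ s' : S, P s (πplus s) s' * Vplus s' := hVplus s
    have : δ s ≤ γ * ∑ s' : S, P s (πplus s) s' * Vπ s'
        - γ * ∑ s' : S, P s (πplus s) s' * Vplus s' := by
      simp only [hδ]; linarith
    calc δ s ≤ _ := this
      _ = γ * ∑ s' : S, P s (πplus s) s' * δ s' := by
          rw [← mul_sub, ← Finset.sum_sub_distrib]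
          congr 1; apply Finset.sum_congr rfl; intro x _; ring
  obtain ⟨s0, _, hs0⟩ := Finset.exists_mem_eq_sup' (Finset.univ_nonempty (α := S)) δ
  set M := Finset.univ.sup' (Finset.univ_nonempty (α := S)) δ with hM
  have hle : ∀ s, δ s ≤ M := fun s => Finset.le_sup' δ (Finset.mem_univ s)
  have hsumle : ∀ s a, ∑ s' : S, P s a s' * δ s' ≤ M := by
    intro s a
    calc ∑ s' : S, P s a s' * δ s'
        ≤ ∑ s' : S, P s a s' * M :=
          Finset.sum_le_sum fun i _ =>
            mul_le_mul_of_nonneg_left (hle i) (hPnn s a i)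
      _ = M := by rw [← Finset.sum_mul, hPsum, one_mul]
  have hMle : M ≤ γ * M := by
    calc M = δ s0 := hs0
      _ ≤ γ * ∑ s' : S, P s0 (πplus s0) s' * δ s' := hstep s0
      _ ≤ γ * M := mul_le_mul_of_nonneg_left (hsumle s0 _) hγ0
  have hM0 : M ≤ 0 := by nlinarith
  have hgeq : ∀ s, Vplus s ≥ Vπ s := by
    intro s
    have := hle s
    simp only [hδ] at this
    linarith
  refine ⟨hgeq, fun s hs => ?_⟩
  have h1 : Qπ s (π s) = Vπ s := by rw [hQπ, ← hVπ]
  have h2 : Qπ s (πplus s) ≤ Vplus s := by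
    rw [hQπ, hVplus s]
    have : ∑ s' : S, P s (πplus s) s' * Vπ s' ≤ ∑ s' : S, P s (πplus s) s' * Vplus s' :=
      Finset.sum_le_sum fun i _ => mul_le_mul_of_nonneg_left (hgeq i) (hPnn s _ i)
    nlinarith
  rw [h1] at hs
  linarith
end
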